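/- Final distribution of planner-guided sampling as a sum over unmasking orders: let V, D, G be as below and let p^G(x) be the distribution of the sequence x_L produced by sampling with the planner. Then for every x ∈ V^L, p^G(x) = Σ_{σ ∈ Σ^L} Π_{k=1}^L Cat( x^{σ(k)}; D^{σ(k)}( x^{σ(<k)} ) ) · F( x^{σ(<k)}, x^{σ(k)}, σ(k) ), where Σ^L is the set of permutations of {1,...,L}, x^{σ(<k)} denotes x with every coordinate outside {σ(1),...,σ(k-1)} replaced by m, and F(x, y, i) = E_{z ~ D(x)}[ Cat(i; G(z^{-i,y}, x)) ]. -/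
import Mathlib


open Finset

/-- `Fplan D G x y i = E_{z ~ D(x)}[ Cat(i ; G(z^{-i,y}, x)) ]`, the coordinates of `z`
being sampled independently, `z^j ~ D^j(x)`. -/
noncomputable def Fplan {V : Type*} [Fintype V] [DecidableEq V] {L : ℕ}
    (D : (Fin L → V) → Fin L → V → ℝ)
    (G : (Fin L → V) → (Fin L → V) → Fin L → ℝ)
    (x : Fin L → V) (y : V) (i : Fin L) : ℝ :=
  ∑ z : Fin L → V, (∏ j, D x j (z j)) * G (Function.update z i y) x i

/-- One step of planner-guided sampling: from state `x`, sample `z ~ D(x)`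
coordinatewise independently, sample a position `i ~ G(z, x)`, and replace the `i`-th
coordinate of `x` by `z i`.  `stepKernel D G x w` is the probability of moving to `w`. -/
noncomputable def stepKernel {V : Type*} [Fintype V] [DecidableEq V] {L : ℕ}
    (D : (Fin L → V) → Fin L → V → ℝ)
    (G : (Fin L → V) → (Fin L → V) → Fin L → ℝ)
    (x w : Fin L → V) : ℝ :=
  ∑ z : Fin L → V, (∏ j, D x j (z j)) *
    ∑ i ∈ Finset.univ.filter (fun i : Fin L => Function.update x i (z i) = w), G z x i

/-- The distribution of the state after `k` steps of planner-guided sampling,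
starting from the fully masked sequence. -/
noncomputable def sampleDist {V : Type*} [Fintype V] [DecidableEq V] {L : ℕ}
    (D : (Fin L → V) → Fin L → V → ℝ)
    (G : (Fin L → V) → (Fin L → V) → Fin L → ℝ)
    (mask : V) : ℕ → (Fin L → V) → ℝ
  | 0, w => if w = (fun _ => mask) then (1 : ℝ) else 0
  | k + 1, w => ∑ x : Fin L → V, sampleDist D G mask k x * stepKernel D G x w

/-- `x^{σ(<k)}`: the sequence `x` with every coordinate outside `{σ 0, …, σ (k-1)}`
replaced by the mask symbol. -/
def prefixMask {V : Type*} [DecidableEq V] {L : ℕ}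
    (mask : V) (x : Fin L → V) (σ : Equiv.Perm (Fin L)) (k : Fin L) : Fin L → V :=
  fun i => if ∃ j : Fin L, j < k ∧ σ j = i then x i else mask

section aux

set_option linter.unusedSectionVars false

variable {V : Type*} [Fintype V] [DecidableEq V] {L : ℕ}

lemma slice_swap (i : Fin L) (c y : V) (F : (Fin L → V) → ℝ) :
    (∑ z : Fin L → V, if z i = c then F z else 0)
      = ∑ z : Fin L → V, if z i = y then F (Function.update z i c) else 0 := by
  have hinv : Function.Involutive
      (fun z : Fin L → V => Function.update z i (Equiv.swap c y (z i))) := by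
    intro z
    funext j
    by_cases hj : j = i
    · subst hj; simp
    · simp [Function.update_of_ne hj]
  refine Fintype.sum_bijective _ hinv.bijective _ _ ?_
  intro z
  by_cases hz : z i = c
  · have h1 : Function.update z i (Equiv.swap c y (z i)) i = y := by simp [hz]
    rw [if_pos hz, if_pos h1]
    congr 1
    funext j
    by_cases hj : j = i
    · subst hj; simp [hz]
    · simp [Function.update_of_ne hj]
  · have h1 : ¬ (Function.update z i (Equiv.swap c y (z i)) i = y) := by
      simp only [Function.update_self]
      intro hcon
      exact hz ((Equiv.swap c y).injective
        (by simp [hcon] : Equiv.swap c y (z i) = Equiv.swap c y c))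
    rw [if_neg hz, if_neg h1]

lemma sum_slices (i : Fin L) (F : (Fin L → V) → ℝ) :
    ∑ z : Fin L → V, F z = ∑ c : V, ∑ z : Fin L → V, if z i = c then F z else 0 := by
  rw [Finset.sum_comm]
  refine Finset.sum_congr rfl fun z _ => ?_
  simp [Finset.sum_ite_eq]

variable (D : (Fin L → V) → Fin L → V → ℝ) (G : (Fin L → V) → (Fin L → V) → Fin L → ℝ)

lemma slice_Fplan (hD1 : ∀ x i, ∑ y, D x i y = 1)
    (x : Fin L → V) (i : Fin L) (y : V) :
    (∑ z : Fin L → V, if z i = y then (∏ j, D x j (z j)) * G z x i else 0)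
      = D x i y * Fplan D G x y i := by
  have hprod : ∀ z : Fin L → V,
      (∏ j, D x j (z j)) = D x i (z i) * ∏ j ∈ Finset.univ.erase i, D x j (z j) := by
    intro z
    exact (Finset.mul_prod_erase Finset.univ (fun j => D x j (z j)) (Finset.mem_univ i)).symm
  set S : ℝ := ∑ z : Fin L → V,
      if z i = y then (∏ j ∈ Finset.univ.erase i, D x j (z j)) * G z x i else 0 with hS
  have hL : (∑ z : Fin L → V, if z i = y then (∏ j, D x j (z j)) * G z x i else 0)
      = D x i y * S := by
    rw [hS, Finset.mul_sum]
    refine Finset.sum_congr rfl fun z _ => ?_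
    by_cases hz : z i = y
    · rw [if_pos hz, if_pos hz, hprod z, hz, mul_assoc]
    · simp [hz]
  have hR : Fplan D G x y i = S := by
    rw [Fplan, sum_slices i]
    have hc : ∀ c : V, (∑ z : Fin L → V,
        if z i = c then (∏ j, D x j (z j)) * G (Function.update z i y) x i else 0)
        = D x i c * S := by
      intro c
      have h2 : (∑ z : Fin L → V,
          if z i = c then (∏ j, D x j (z j)) * G (Function.update z i y) x i else 0)
          = D x i c * ∑ z : Fin L → V,
            if z i = c then (∏ j ∈ Finset.univ.erase i, D x j (z j)) *
              G (Function.update z i y) x i else 0 := by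
        rw [Finset.mul_sum]
        refine Finset.sum_congr rfl fun z _ => ?_
        by_cases hz : z i = c
        · rw [if_pos hz, if_pos hz, hprod z, hz, mul_assoc]
        · simp [hz]
      rw [h2, slice_swap i c y (fun z => (∏ j ∈ Finset.univ.erase i, D x j (z j)) *
              G (Function.update z i y) x i)]
      congr 1
      rw [hS]
      refine Finset.sum_congr rfl fun z _ => ?_
      by_cases hz : z i = y
      · rw [if_pos hz, if_pos hz]
        have h1 : (∏ j ∈ Finset.univ.erase i, D x j (Function.update z i c j))
            = ∏ j ∈ Finset.univ.erase i, D x j (z j) := by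
          refine Finset.prod_congr rfl fun j hj => ?_
          rw [Function.update_of_ne (Finset.ne_of_mem_erase hj)]
        have h3 : Function.update (Function.update z i c) i y = z := by
          rw [Function.update_idem, ← hz, Function.update_eq_self]
        rw [h1, h3]
      · simp [hz]
    rw [Finset.sum_congr rfl (fun c _ => hc c), ← Finset.sum_mul, hD1, one_mul]
  rw [hL, hR]

lemma step_eq (hD1 : ∀ x i, ∑ y, D x i y = 1) (x w : Fin L → V) :
    stepKernel D G x w
      = ∑ i : Fin L, if (∀ j, j ≠ i → x j = w j)
          then D x i (w i) * Fplan D G x (w i) i else 0 := by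
  rw [stepKernel]
  have h1 : ∀ z : Fin L → V, (∏ j, D x j (z j)) *
      (∑ i ∈ Finset.univ.filter fun i : Fin L => Function.update x i (z i) = w, G z x i)
      = ∑ i : Fin L, if Function.update x i (z i) = w
          then (∏ j, D x j (z j)) * G z x i else 0 := by
    intro z
    rw [Finset.sum_filter, Finset.mul_sum]
    exact Finset.sum_congr rfl fun i _ => by
      by_cases h : Function.update x i (z i) = w <;> simp [h]
  rw [Finset.sum_congr rfl fun z _ => h1 z, Finset.sum_comm]
  refine Finset.sum_congr rfl fun i _ => ?_
  by_cases hc : ∀ j, j ≠ i → x j = w j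
  · rw [if_pos hc, ← slice_Fplan D G hD1 x i (w i)]
    refine Finset.sum_congr rfl fun z _ => ?_
    have hiff : Function.update x i (z i) = w ↔ z i = w i := by
      rw [Function.update_eq_iff]
      exact and_iff_left hc
    rw [if_congr hiff rfl rfl]
  · rw [if_neg hc]
    refine Finset.sum_eq_zero fun z _ => ?_
    rw [if_neg]
    intro h
    exact hc fun j hj => by rw [← h, Function.update_of_ne hj]

end aux

section defs

set_option linter.unusedSectionVars false

variable {V : Type*} [Fintype V] [DecidableEq V] {L : ℕ}

def pmask (mask : V) (w : Fin L → V) {k : ℕ} (f : Fin k ↪ Fin L) (n : ℕ) : Fin L → V :=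
  fun i => if ∃ j : Fin k, (j : ℕ) < n ∧ f j = i then w i else mask

def snocE {L k : ℕ} (f : Fin k ↪ Fin L) (i : Fin L) (h : ∀ j, f j ≠ i) :
    Fin (k + 1) ↪ Fin L :=
  ⟨Fin.snoc f i, by
    intro a b hab
    induction a using Fin.lastCases with
    | last =>
      induction b using Fin.lastCases with
      | last => rfl
      | cast b =>
        rw [Fin.snoc_last, Fin.snoc_castSucc] at hab
        exact absurd hab.symm (h b)
    | cast a =>
      induction b using Fin.lastCases with
      | last =>
        rw [Fin.snoc_castSucc, Fin.snoc_last] at hab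
        exact absurd hab (h a)
      | cast b =>
        rw [Fin.snoc_castSucc, Fin.snoc_castSucc] at hab
        exact congrArg Fin.castSucc (f.injective hab)⟩

@[simp] lemma snocE_castSucc {L k : ℕ} (f : Fin k ↪ Fin L) (i : Fin L) (h : ∀ j, f j ≠ i)
    (j : Fin k) : snocE f i h j.castSucc = f j := by
  show Fin.snoc (α := fun _ => Fin L) (⇑f) i j.castSucc = f j
  exact Fin.snoc_castSucc (α := fun _ => Fin L) i (⇑f) j

@[simp] lemma snocE_last {L k : ℕ} (f : Fin k ↪ Fin L) (i : Fin L) (h : ∀ j, f j ≠ i) :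
    snocE f i h (Fin.last k) = i := by
  show Fin.snoc (α := fun _ => Fin L) (⇑f) i (Fin.last k) = i
  exact Fin.snoc_last (α := fun _ => Fin L) i (⇑f)

def restrE {L k : ℕ} (g : Fin (k + 1) ↪ Fin L) : Fin k ↪ Fin L :=
  ⟨fun j => g j.castSucc, fun a b hab => Fin.castSucc_injective _ (g.injective hab)⟩

lemma pmask_snocE_lt (mask : V) (w : Fin L → V) {k : ℕ} (f : Fin k ↪ Fin L) (i : Fin L)
    (h : ∀ j, f j ≠ i) (n : ℕ) (hn : n ≤ k) :
    pmask mask w (snocE f i h) n = pmask mask (Function.update w i mask) f n := by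
  funext i'
  simp only [pmask]
  by_cases hc : ∃ j' : Fin k, (j' : ℕ) < n ∧ f j' = i'
  · have hc' : ∃ j' : Fin (k + 1), (j' : ℕ) < n ∧ snocE f i h j' = i' := by
      obtain ⟨j', hlt, hj'⟩ := hc
      exact ⟨j'.castSucc, by simpa using hlt, by simpa using hj'⟩
    rw [if_pos hc', if_pos hc]
    obtain ⟨j', _, rfl⟩ := hc
    exact (Function.update_of_ne (h j') _ _).symm
  · have hc' : ¬ ∃ j' : Fin (k + 1), (j' : ℕ) < n ∧ snocE f i h j' = i' := by
      rintro ⟨j', hlt, hj'⟩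
      have hjk : (j' : ℕ) < k := lt_of_lt_of_le hlt hn
      have hcast : (⟨(j' : ℕ), hjk⟩ : Fin k).castSucc = j' := by
        apply Fin.ext; simp
      have h2 := snocE_castSucc f i h ⟨(j' : ℕ), hjk⟩
      rw [hcast, hj'] at h2
      exact hc ⟨⟨(j' : ℕ), hjk⟩, hlt, h2.symm⟩
    rw [if_neg hc', if_neg hc]

lemma pmask_snocE_top (mask : V) (w : Fin L → V) {k : ℕ} (f : Fin k ↪ Fin L) (i : Fin L)
    (h : ∀ j, f j ≠ i)
    (hQ : ∀ i', (∀ j, f j ≠ i') → i' ≠ i → w i' = mask) :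
    pmask mask w (snocE f i h) k = Function.update w i mask := by
  funext i'
  simp only [pmask]
  by_cases hc : ∃ j' : Fin k, f j' = i'
  · obtain ⟨j', rfl⟩ := hc
    have hc' : ∃ j'' : Fin (k + 1), (j'' : ℕ) < k ∧ snocE f i h j'' = f j' :=
      ⟨j'.castSucc, by simpa using j'.isLt, by simp⟩
    rw [if_pos hc']
    exact (Function.update_of_ne (h j') _ _).symm
  · have hc' : ¬ ∃ j'' : Fin (k + 1), (j'' : ℕ) < k ∧ snocE f i h j'' = i' := by
      rintro ⟨j'', hlt, hj''⟩
      have hcast : (⟨(j'' : ℕ), hlt⟩ : Fin k).castSucc = j'' := by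
        apply Fin.ext; simp
      have h2 := snocE_castSucc f i h ⟨(j'' : ℕ), hlt⟩
      rw [hcast, hj''] at h2
      exact hc ⟨⟨(j'' : ℕ), hlt⟩, h2.symm⟩
    rw [if_neg hc']
    by_cases hi : i' = i
    · subst hi; simp
    · rw [Function.update_of_ne hi]
      exact (hQ i' (fun j hj => hc ⟨j, hj⟩) hi).symm

noncomputable def Eterm (mask : V) (D : (Fin L → V) → Fin L → V → ℝ)
    (G : (Fin L → V) → (Fin L → V) → Fin L → ℝ) {k : ℕ}
    (f : Fin k ↪ Fin L) (x : Fin L → V) : ℝ :=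
  ∏ j : Fin k, D (pmask mask x f (j : ℕ)) (f j) (x (f j)) *
    Fplan D G (pmask mask x f (j : ℕ)) (x (f j)) (f j)

lemma sum3 {α β γ : Type*} [Fintype α] [Fintype β] [Fintype γ]
    (A : β → α → ℝ) (B : α → γ → ℝ) :
    ∑ x : α, (∑ f : β, A f x) * (∑ i : γ, B x i)
      = ∑ f : β, ∑ i : γ, ∑ x : α, A f x * B x i := by
  have h : ∀ x : α, (∑ f : β, A f x) * (∑ i : γ, B x i)
      = ∑ f : β, ∑ i : γ, A f x * B x i := by
    intro x
    rw [Finset.sum_mul]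
    exact Finset.sum_congr rfl fun f _ => Finset.mul_sum _ _ _
  rw [Finset.sum_congr rfl fun x _ => h x, Finset.sum_comm]
  exact Finset.sum_congr rfl fun f _ => Finset.sum_comm

lemma key_sum (mask : V) (D : (Fin L → V) → Fin L → V → ℝ)
    (G : (Fin L → V) → (Fin L → V) → Fin L → ℝ)
    (hDmask : ∀ x i, D x i mask = 0)
    (hGsupp : ∀ z x i, x i ≠ mask → G z x i = 0)
    {k : ℕ} (w : Fin L → V) (f : Fin k ↪ Fin L) (i : Fin L) :
    (∑ x : Fin L → V,
        (if ∀ i', (∀ j, f j ≠ i') → x i' = mask then Eterm mask D G f x else 0) *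
        (if ∀ j, j ≠ i → x j = w j then D x i (w i) * Fplan D G x (w i) i else 0))
      = if (∀ j, f j ≠ i) ∧ (∀ i', (∀ j, f j ≠ i') → i' ≠ i → w i' = mask) then
          Eterm mask D G f (Function.update w i mask) *
            (D (Function.update w i mask) i (w i) *
              Fplan D G (Function.update w i mask) (w i) i)
        else 0 := by
  by_cases hri : ∀ j, f j ≠ i
  · by_cases hQ : ∀ i', (∀ j, f j ≠ i') → i' ≠ i → w i' = mask
    · rw [if_pos ⟨hri, hQ⟩]
      have hterm : ∀ x : Fin L → V,
          (if ∀ i', (∀ j, f j ≠ i') → x i' = mask then Eterm mask D G f x else 0) *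
          (if ∀ j, j ≠ i → x j = w j then D x i (w i) * Fplan D G x (w i) i else 0)
          = if x = Function.update w i mask then
              Eterm mask D G f (Function.update w i mask) *
                (D (Function.update w i mask) i (w i) *
                  Fplan D G (Function.update w i mask) (w i) i)
            else 0 := by
        intro x
        by_cases hx : x = Function.update w i mask
        · subst hx
          rw [if_pos rfl]
          have hC1 : ∀ i', (∀ j, f j ≠ i') → Function.update w i mask i' = mask := by
            intro i' hi'
            by_cases hii : i' = i
            · subst hii; exact Function.update_self _ _ _
            · rw [Function.update_of_ne hii]; exact hQ i' hi' hii
          have hC2 : ∀ j, j ≠ i → Function.update w i mask j = w j :=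
            fun j hj => Function.update_of_ne hj _ _
          rw [if_pos hC1, if_pos hC2]
        · rw [if_neg hx]
          by_cases h1 : ∀ i', (∀ j, f j ≠ i') → x i' = mask
          · by_cases h2 : ∀ j, j ≠ i → x j = w j
            · exfalso
              apply hx
              funext j
              by_cases hj : j = i
              · subst hj; rw [Function.update_self]; exact h1 j hri
              · rw [Function.update_of_ne hj]; exact h2 j hj
            · rw [if_neg h2, mul_zero]
          · rw [if_neg h1, zero_mul]
      rw [Finset.sum_congr rfl fun x _ => hterm x,
        Finset.sum_ite_eq' Finset.univ (Function.update w i mask)]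
      simp
    · rw [if_neg (fun hand => hQ hand.2)]
      refine Finset.sum_eq_zero fun x _ => ?_
      by_cases h1 : ∀ i', (∀ j, f j ≠ i') → x i' = mask
      · by_cases h2 : ∀ j, j ≠ i → x j = w j
        · exfalso
          apply hQ
          intro i' hfi' hii
          rw [← h2 i' hii]
          exact h1 i' hfi'
        · rw [if_neg h2, mul_zero]
      · rw [if_neg h1, zero_mul]
  · rw [if_neg (fun hand => hri hand.1)]
    refine Finset.sum_eq_zero fun x _ => ?_
    push_neg at hri
    obtain ⟨j0, hj0⟩ := hri
    by_cases h1 : ∀ i', (∀ j, f j ≠ i') → x i' = mask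
    swap
    · rw [if_neg h1, zero_mul]
    by_cases h2 : ∀ j, j ≠ i → x j = w j
    swap
    · rw [if_neg h2, mul_zero]
    rw [if_pos h1, if_pos h2]
    by_cases hxi : x i = mask
    · have hE : Eterm mask D G f x = 0 := by
        refine Finset.prod_eq_zero (Finset.mem_univ j0) ?_
        have hxf : x (f j0) = mask := by rw [hj0]; exact hxi
        rw [hxf, hDmask, zero_mul]
      rw [hE, zero_mul]
    · have hF : Fplan D G x (w i) i = 0 :=
        Finset.sum_eq_zero fun z _ => by rw [hGsupp _ _ _ hxi, mul_zero]
      rw [hF, mul_zero, mul_zero]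

lemma claimB (mask : V) (D : (Fin L → V) → Fin L → V → ℝ)
    (G : (Fin L → V) → (Fin L → V) → Fin L → ℝ)
    (hD1 : ∀ x i, ∑ y, D x i y = 1)
    (hDmask : ∀ x i, D x i mask = 0)
    (hGsupp : ∀ z x i, x i ≠ mask → G z x i = 0) :
    ∀ (k : ℕ) (w : Fin L → V),
      sampleDist D G mask k w
        = ∑ f : Fin k ↪ Fin L,
            if ∀ i, (∀ j, f j ≠ i) → w i = mask then Eterm mask D G f w else 0 := by
  intro k
  induction k with
  | zero =>
    intro w
    simp only [sampleDist]
    rw [Fintype.sum_unique]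
    simp only [Eterm, Finset.univ_eq_empty, Finset.prod_empty]
    refine if_congr ?_ rfl rfl
    constructor
    · intro hE i _
      rw [hE]
    · intro hA
      funext i
      exact hA i (fun j => j.elim0)
  | succ k IH =>
    intro w
    simp only [sampleDist]
    have hA : ∀ x : Fin L → V, sampleDist D G mask k x * stepKernel D G x w
        = (∑ f : Fin k ↪ Fin L,
            if ∀ i, (∀ j, f j ≠ i) → x i = mask then Eterm mask D G f x else 0) *
          (∑ i : Fin L,
            if ∀ j, j ≠ i → x j = w j then D x i (w i) * Fplan D G x (w i) i else 0) := by
      intro x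
      rw [IH x, step_eq D G hD1 x w]
    rw [Finset.sum_congr rfl fun x _ => hA x,
      sum3 (fun f x => if ∀ i, (∀ j, f j ≠ i) → x i = mask then Eterm mask D G f x else 0)
        (fun x i => if ∀ j, j ≠ i → x j = w j then D x i (w i) * Fplan D G x (w i) i else 0),
      Finset.sum_congr rfl fun f _ => Finset.sum_congr rfl fun i _ =>
        key_sum mask D G hDmask hGsupp w f i]
    rw [← Finset.sum_product']
    rw [show (Finset.univ ×ˢ Finset.univ : Finset ((Fin k ↪ Fin L) × Fin L)) = Finset.univ
      from Finset.univ_product_univ]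
    conv_lhs => rw [← Finset.sum_filter]
    conv_rhs => rw [← Finset.sum_filter]
    refine Finset.sum_bij'
      (fun p hp => snocE p.1 p.2 (Finset.mem_filter.mp hp).2.1)
      (fun g _ => (restrE g, g (Fin.last k))) ?_ ?_ ?_ ?_ ?_
    · intro p hp
      obtain ⟨-, hP⟩ := Finset.mem_filter.mp hp
      refine Finset.mem_filter.mpr ⟨Finset.mem_univ _, ?_⟩
      intro i' hi'
      refine hP.2 i' (fun j => ?_) (fun heq => ?_)
      · have := hi' j.castSucc
        rwa [snocE_castSucc] at this
      · exact hi' (Fin.last k) (by rw [snocE_last]; exact heq.symm)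
    · intro g hg
      have hCw := (Finset.mem_filter.mp hg).2
      refine Finset.mem_filter.mpr ⟨Finset.mem_univ _, ⟨?_, ?_⟩⟩
      · intro j hj'
        exact absurd (g.injective hj') (Fin.ne_of_lt (Fin.castSucc_lt_last j))
      · intro i' hfi' hii
        refine hCw i' ?_
        intro j
        induction j using Fin.lastCases with
        | last => exact fun h => hii h.symm
        | cast j => exact hfi' j
    · intro p hp
      refine Prod.ext ?_ ?_
      · exact DFunLike.ext _ _ fun j =>
          snocE_castSucc p.1 p.2 (Finset.mem_filter.mp hp).2.1 j
      · exact snocE_last p.1 p.2 (Finset.mem_filter.mp hp).2.1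
    · intro g hg
      refine DFunLike.ext _ _ fun j => ?_
      induction j using Fin.lastCases with
      | last => rw [snocE_last]
      | cast j => rw [snocE_castSucc]; rfl
    · intro p hp
      obtain ⟨-, hri, hQ⟩ := Finset.mem_filter.mp hp
      have hmain : Eterm mask D G (snocE p.1 p.2 hri) w
          = Eterm mask D G p.1 (Function.update w p.2 mask) *
            (D (Function.update w p.2 mask) p.2 (w p.2) *
              Fplan D G (Function.update w p.2 mask) (w p.2) p.2) := by
        unfold Eterm
        rw [Fin.prod_univ_castSucc]
        congr 1
        · refine Finset.prod_congr rfl fun j _ => ?_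
          rw [snocE_castSucc, Fin.coe_castSucc,
            pmask_snocE_lt mask w p.1 p.2 hri (j : ℕ) (le_of_lt j.isLt),
            show w (p.1 j) = Function.update w p.2 mask (p.1 j) from
              (Function.update_of_ne (hri j) _ _).symm]
        · rw [snocE_last, Fin.val_last, pmask_snocE_top mask w p.1 p.2 hri hQ]
      exact hmain.symm

end defs

/-- **Final distribution of planner-guided sampling as a sum over unmasking orders.**
For a denoiser `D` (which never outputs the mask token) and a planner `G` supported on
masked positions, the distribution `p^G` of the sequence produced after `L` steps of
planner-guided sampling satisfies, for every `x`,
`p^G(x) = Σ_{σ ∈ Σ^L} Π_{k=1}^{L} Cat(x^{σ(k)}; D^{σ(k)}(x^{σ(<k)})) · F(x^{σ(<k)}, x^{σ(k)}, σ(k))`. -/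
theorem planner_final_distribution
    {V : Type*} [Fintype V] [DecidableEq V] {L : ℕ}
    (mask : V)
    (D : (Fin L → V) → Fin L → V → ℝ)
    (G : (Fin L → V) → (Fin L → V) → Fin L → ℝ)
    (hD0 : ∀ x i y, 0 ≤ D x i y) (hD1 : ∀ x i, ∑ y, D x i y = 1)
    (hDmask : ∀ x i, D x i mask = 0)
    (hG0 : ∀ z x i, 0 ≤ G z x i)
    (hG1 : ∀ z x, (∃ i, x i = mask) → ∑ i, G z x i = 1)
    (hGsupp : ∀ z x i, x i ≠ mask → G z x i = 0)
    (x : Fin L → V) :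
    sampleDist D G mask L x
      = ∑ σ : Equiv.Perm (Fin L), ∏ k : Fin L,
          D (prefixMask mask x σ k) (σ k) (x (σ k)) *
            Fplan D G (prefixMask mask x σ k) (x (σ k)) (σ k) := by

  rw [claimB mask D G hD1 hDmask hGsupp L x]
  refine (Fintype.sum_bijective (fun σ : Equiv.Perm (Fin L) => σ.toEmbedding)
    ⟨?_, ?_⟩ _ _ ?_).symm
  · intro a b hab
    exact Equiv.ext fun i => DFunLike.congr_fun hab i
  · intro f
    have hsurj : Function.Surjective f := Finite.injective_iff_surjective.mp f.injective
    exact ⟨Equiv.ofBijective f ⟨f.injective, hsurj⟩, DFunLike.ext _ _ fun i => rfl⟩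
  · intro σ
    have hcond : ∀ i, (∀ j, σ.toEmbedding j ≠ i) → x i = mask := by
      intro i h
      exact absurd (σ.apply_symm_apply i) (h (σ.symm i))
    rw [if_pos hcond]
    unfold Eterm
    refine Finset.prod_congr rfl fun k _ => ?_
    have hpm : prefixMask mask x σ k = pmask mask x σ.toEmbedding (k : ℕ) := by
      funext i
      simp only [prefixMask, pmask, Equiv.coe_toEmbedding]
      refine if_congr (exists_congr fun j => and_congr_left' ?_) rfl rfl
      exact Fin.lt_def
    rw [hpm]
    rfl
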